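/- For every m ∈ ℕ and every nonempty bounded open set K ⊆ ℝ³ there exists a constant C > 0 such that for every h > 0, every c ∈ ℝ³, and every polynomial map v : ℝ³ → ℝ³ of degree at most m, there exists an antisymmetric real 3×3 matrix B with ∫_{K_{h,c}} ‖∇v(x) + B‖_F² dx ≤ C · ∫_{K_{h,c}} ‖ε(v)(x)‖_F² dx. In particular, the Korn constant can be chosen independent of the size h and the position c of the element. -/

import Mathlib

open MeasureTheory Matrix

/-- `pderiv3 v i j x` is the partial derivative `∂ⱼ vᵢ (x)` of the `i`-th component of
`v : ℝ³ → ℝ³` in the `j`-th coordinate direction at `x`. -/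
noncomputable def pderiv3 (v : (Fin 3 → ℝ) → (Fin 3 → ℝ)) (i j : Fin 3) (x : Fin 3 → ℝ) : ℝ :=
  fderiv ℝ (fun y => v y i) x (Pi.single j 1)

/-- `jacMat v x` is the Jacobian matrix `∇v(x)` with entries `(∇v(x))ᵢⱼ = ∂ⱼvᵢ(x)`. -/
noncomputable def jacMat (v : (Fin 3 → ℝ) → (Fin 3 → ℝ)) (x : Fin 3 → ℝ) :
    Matrix (Fin 3) (Fin 3) ℝ :=
  Matrix.of fun i j => pderiv3 v i j x

/-- `symGrad v x` is the symmetric gradient `ε(v)(x)`, the 3×3 matrix with entries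
`(∂ⱼvᵢ(x) + ∂ᵢvⱼ(x)) / 2`. -/
noncomputable def symGrad (v : (Fin 3 → ℝ) → (Fin 3 → ℝ)) (x : Fin 3 → ℝ) :
    Matrix (Fin 3) (Fin 3) ℝ :=
  Matrix.of fun i j => (pderiv3 v i j x + pderiv3 v j i x) / 2

/-- `frobSq M` is the square of the Frobenius norm of the matrix `M`. -/
def frobSq (M : Matrix (Fin 3) (Fin 3) ℝ) : ℝ := ∑ i, ∑ j, (M i j) ^ 2

/-- The scaled element `K_{h,c} = { h·x + c : x ∈ K }`. -/
def scaledElt (K : Set (Fin 3 → ℝ)) (h : ℝ) (c : Fin 3 → ℝ) : Set (Fin 3 → ℝ) :=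
  (fun x => h • x + c) '' K

open MvPolynomial

section KornAux

noncomputable def evalGrad (p : MvPolynomial (Fin 3) ℝ) (x : Fin 3 → ℝ) :
    (Fin 3 → ℝ) →L[ℝ] ℝ :=
  ∑ j, (eval x (pderiv j p)) • (ContinuousLinearMap.proj j : (Fin 3 → ℝ) →L[ℝ] ℝ)

lemma evalGrad_apply (p : MvPolynomial (Fin 3) ℝ) (x y : Fin 3 → ℝ) :
    evalGrad p x y = ∑ j, eval x (pderiv j p) * y j := by
  simp [evalGrad, ContinuousLinearMap.sum_apply]

lemma hasFDerivAt_eval (p : MvPolynomial (Fin 3) ℝ) (x : Fin 3 → ℝ) :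
    HasFDerivAt (fun y => eval y p) (evalGrad p x) x := by
  induction p using MvPolynomial.induction_on with
  | C a =>
      simp only [eval_C]
      have : evalGrad (C a) x = 0 := by
        ext y; simp [evalGrad_apply, pderiv_C]
      rw [this]
      exact hasFDerivAt_const a x
  | add p q hp hq =>
      have : evalGrad (p + q) x = evalGrad p x + evalGrad q x := by
        ext y; simp [evalGrad_apply, Finset.sum_add_distrib, add_mul]
      rw [this]
      exact (hp.add hq).congr_of_eventuallyEq (Filter.Eventually.of_forall fun y => map_add (eval y) p q)
  | mul_X p i hp =>
      have h1 : HasFDerivAt (fun y : Fin 3 → ℝ => y i)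
          (ContinuousLinearMap.proj i : (Fin 3 → ℝ) →L[ℝ] ℝ) x :=
        (ContinuousLinearMap.proj i : (Fin 3 → ℝ) →L[ℝ] ℝ).hasFDerivAt
      have h2 := hp.mul' h1
      have : evalGrad (p * X i) x
          = eval x p • (ContinuousLinearMap.proj i : (Fin 3 → ℝ) →L[ℝ] ℝ)
            + (evalGrad p x).smulRight (x i) := by
        ext y
        simp only [evalGrad_apply, ContinuousLinearMap.add_apply,
          ContinuousLinearMap.smul_apply, ContinuousLinearMap.proj_apply, smul_eq_mul,
          ContinuousLinearMap.smulRight_apply]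
        have : ∀ j : Fin 3, eval x (pderiv j (p * X i)) * y j
            = (eval x (pderiv j p) * y j) * x i
              + (if j = i then eval x p * y i else 0) := by
          intro j
          rw [pderiv_mul]
          by_cases hji : j = i
          · subst hji; simp [pderiv_X_self]; ring
          · simp [pderiv_X_of_ne hji, hji]; ring
        rw [Finset.sum_congr rfl fun j _ => this j, Finset.sum_add_distrib]
        rw [← Finset.sum_mul]
        simp [add_comm]
      have h3 : eval x p • (ContinuousLinearMap.proj i : (Fin 3 → ℝ) →L[ℝ] ℝ)
          + (evalGrad p x).smulRight (x i)
          = eval x p • (ContinuousLinearMap.proj i : (Fin 3 → ℝ) →L[ℝ] ℝ)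
            + MulOpposite.op (x i) • evalGrad p x :=
        ContinuousLinearMap.ext fun y => by simp [mul_comm]
      rw [this, h3]
      exact h2.congr_of_eventuallyEq (Filter.Eventually.of_forall fun y => by simp)


lemma evalGrad_single (p : MvPolynomial (Fin 3) ℝ) (x : Fin 3 → ℝ) (j : Fin 3) :
    evalGrad p x (Pi.single j 1) = eval x (pderiv j p) := by
  rw [evalGrad_apply]
  rw [Finset.sum_eq_single j]
  · simp
  · intro k _ hk; simp [Pi.single_apply, hk]
  · simp

lemma pderiv3_eval (P : Fin 3 → MvPolynomial (Fin 3) ℝ) (i j : Fin 3) (x : Fin 3 → ℝ) :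
    pderiv3 (fun y k => eval y (P k)) i j x = eval x (pderiv j (P i)) := by
  unfold pderiv3
  rw [(hasFDerivAt_eval (P i) x).fderiv, evalGrad_single]

lemma continuous_evalp (p : MvPolynomial (Fin 3) ℝ) :
    Continuous (fun y : Fin 3 → ℝ => eval y p) := by
  have : Differentiable ℝ (fun y : Fin 3 → ℝ => eval y p) :=
    fun x => (hasFDerivAt_eval p x).differentiableAt
  exact this.continuous

lemma pderiv_comm (i j : Fin 3) (p : MvPolynomial (Fin 3) ℝ) :
    pderiv i (pderiv j p) = pderiv j (pderiv i p) := by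
  induction p using MvPolynomial.induction_on' with
  | monomial d a =>
      rw [pderiv_monomial, pderiv_monomial, pderiv_monomial, pderiv_monomial]
      rcases eq_or_ne i j with rfl | hij
      · rfl
      · congr 1
        · rw [tsub_right_comm]
        · rw [Finsupp.tsub_apply, Finsupp.tsub_apply,
            Finsupp.single_eq_of_ne (Ne.symm hij), Finsupp.single_eq_of_ne hij,
            tsub_zero, tsub_zero]
          ring
  | add p q hp hq => rw [map_add, map_add, map_add, map_add, hp, hq]

lemma eval_const_of_pderiv_zero (p : MvPolynomial (Fin 3) ℝ)
    (h : ∀ k, pderiv k p = 0) (x y : Fin 3 → ℝ) : eval x p = eval y p := by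
  apply is_const_of_fderiv_eq_zero (𝕜 := ℝ)
    (fun z => (hasFDerivAt_eval p z).differentiableAt)
  intro z
  rw [(hasFDerivAt_eval p z).fderiv]
  ext w
  simp [evalGrad_apply, h]

/-- Identity theorem: a multivariate polynomial vanishing on a nonempty open set is zero. -/
lemma eq_zero_of_eqOn_open (p : MvPolynomial (Fin 3) ℝ) {K : Set (Fin 3 → ℝ)}
    (hKo : IsOpen K) (hKne : K.Nonempty) (hv : ∀ x ∈ K, eval x p = 0) : p = 0 := by
  obtain ⟨x₀, hx₀⟩ := hKne
  have han : AnalyticOnNhd ℝ (fun y : Fin 3 → ℝ => eval y p) Set.univ :=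
    AnalyticOnNhd.eval_mvPolynomial p
  have hz : (fun y : Fin 3 → ℝ => eval y p) =ᶠ[nhds x₀] 0 := by
    filter_upwards [hKo.mem_nhds hx₀] with y hy
    exact hv y hy
  have := han.eqOn_zero_of_preconnected_of_eventuallyEq_zero isPreconnected_univ
    (Set.mem_univ x₀) hz
  apply MvPolynomial.funext
  intro x
  simpa using this (Set.mem_univ x)


noncomputable def affSub (h : ℝ) (c : Fin 3 → ℝ) (p : MvPolynomial (Fin 3) ℝ) :
    MvPolynomial (Fin 3) ℝ :=
  aeval (fun j => MvPolynomial.C h * MvPolynomial.X j + MvPolynomial.C (c j)) p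

lemma eval_affSub (h : ℝ) (c : Fin 3 → ℝ) (p : MvPolynomial (Fin 3) ℝ) (y : Fin 3 → ℝ) :
    eval y (affSub h c p) = eval (h • y + c) p := by
  induction p using MvPolynomial.induction_on with
  | C a => simp [affSub, aeval_C]
  | add p q hp hq => simp only [affSub, _root_.map_add, eval_add] at hp hq ⊢; rw [hp, hq]
  | mul_X p i hp =>
      simp only [affSub] at hp ⊢
      rw [_root_.map_mul, eval_mul, hp, aeval_X, eval_mul, eval_X, eval_add, eval_mul,
        eval_C, eval_X, eval_C]
      simp [Pi.add_apply, Pi.smul_apply, smul_eq_mul]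

lemma totalDegree_affSub_le (h : ℝ) (c : Fin 3 → ℝ) (p : MvPolynomial (Fin 3) ℝ) :
    (affSub h c p).totalDegree ≤ p.totalDegree := by
  unfold affSub
  conv_lhs => rw [p.as_sum, map_sum]
  refine (totalDegree_finset_sum _ _).trans (Finset.sup_le fun d hd => ?_)
  rw [aeval_monomial]
  refine (totalDegree_mul _ _).trans ?_
  have hC : (algebraMap ℝ (MvPolynomial (Fin 3) ℝ) (coeff d p)).totalDegree = 0 :=
    totalDegree_C _
  rw [hC, zero_add]
  unfold Finsupp.prod
  refine (totalDegree_finset_prod _ _).trans ?_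
  refine le_trans (Finset.sum_le_sum (g := fun i => d i * 1) fun i _ => ?_) ?_
  · exact (totalDegree_pow _ _).trans
      (Nat.mul_le_mul_left (d i) (by
        refine (totalDegree_add _ _).trans ?_
        simp only [totalDegree_C, max_le_iff]
        constructor
        · exact (totalDegree_mul _ _).trans (by simp [totalDegree_C, totalDegree_X])
        · exact Nat.zero_le 1))
  · calc ∑ i ∈ d.support, d i * 1 = d.sum fun _ k => k := by
          simp [Finsupp.sum]
        _ ≤ p.totalDegree := le_totalDegree hd

lemma eval_pderiv_affSub (h : ℝ) (c : Fin 3 → ℝ) (p : MvPolynomial (Fin 3) ℝ)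
    (j : Fin 3) (y : Fin 3 → ℝ) :
    eval y (pderiv j (affSub h c p)) = h * eval (h • y + c) (pderiv j p) := by
  have hA : HasFDerivAt (fun y : Fin 3 → ℝ => h • y + c)
      (h • ContinuousLinearMap.id ℝ (Fin 3 → ℝ)) y :=
    ((hasFDerivAt_id y).const_smul h).add_const c
  have hcomp : HasFDerivAt (fun y : Fin 3 → ℝ => eval y (affSub h c p))
      ((evalGrad p (h • y + c)).comp (h • ContinuousLinearMap.id ℝ (Fin 3 → ℝ))) y := by
    have := (hasFDerivAt_eval p (h • y + c)).comp y hA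
    refine this.congr_of_eventuallyEq ?_
    filter_upwards with z
    exact (eval_affSub h c p z)
  have hu : evalGrad (affSub h c p) y
      = (evalGrad p (h • y + c)).comp (h • ContinuousLinearMap.id ℝ (Fin 3 → ℝ)) :=
    (hasFDerivAt_eval (affSub h c p) y).unique hcomp
  calc eval y (pderiv j (affSub h c p))
      = evalGrad (affSub h c p) y (Pi.single j 1) := (evalGrad_single _ _ _).symm
    _ = evalGrad p (h • y + c) (h • (Pi.single j 1 : Fin 3 → ℝ)) := by rw [hu]; rfl
    _ = h * eval (h • y + c) (pderiv j p) := by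
        rw [(evalGrad p (h • y + c)).map_smul, evalGrad_single]; rfl

/-- Factorization lemma. -/
lemma exists_bound_of_ker_le {V E F : Type*} [AddCommGroup V] [Module ℝ V]
    [FiniteDimensional ℝ V] [NormedAddCommGroup E] [NormedSpace ℝ E]
    [NormedAddCommGroup F] [NormedSpace ℝ F]
    (f : V →ₗ[ℝ] E) (g : V →ₗ[ℝ] F) (h : LinearMap.ker g ≤ LinearMap.ker f) :
    ∃ C > 0, ∀ v, ‖f v‖ ≤ C * ‖g v‖ := by
  let u : LinearMap.range g →ₗ[ℝ] E :=
    (Submodule.liftQ (LinearMap.ker g) f h).comp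
      (g.quotKerEquivRange.symm.toLinearMap)
  let uc : LinearMap.range g →L[ℝ] E := LinearMap.toContinuousLinearMap u
  refine ⟨‖uc‖ + 1, by positivity, fun v => ?_⟩
  have hfv : f v = uc ⟨g v, LinearMap.mem_range_self g v⟩ := by
    show f v = u ⟨g v, LinearMap.mem_range_self g v⟩
    have h1 : (⟨g v, LinearMap.mem_range_self g v⟩ : LinearMap.range g)
        = g.quotKerEquivRange (Submodule.Quotient.mk v) := by
      ext; rw [LinearMap.quotKerEquivRange_apply_mk]
    simp only [u, LinearMap.comp_apply, h1, LinearEquiv.coe_toLinearMap,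
      LinearEquiv.symm_apply_apply, Submodule.liftQ_apply]
  rw [hfv]
  calc ‖uc ⟨g v, LinearMap.mem_range_self g v⟩‖
      ≤ ‖uc‖ * ‖(⟨g v, LinearMap.mem_range_self g v⟩ : LinearMap.range g)‖ :=
        uc.le_opNorm _
    _ ≤ (‖uc‖ + 1) * ‖g v‖ := by
        have he : ‖(⟨g v, LinearMap.mem_range_self g v⟩ : LinearMap.range g)‖ = ‖g v‖ := rfl
        rw [he]
        have : (0:ℝ) ≤ ‖g v‖ := norm_nonneg _
        nlinarith [norm_nonneg uc]


/-- antisymmetric-part polynomial -/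
noncomputable def aPoly (P : Fin 3 → MvPolynomial (Fin 3) ℝ) (i j : Fin 3) :
    MvPolynomial (Fin 3) ℝ :=
  MvPolynomial.C ((2:ℝ)⁻¹) * (pderiv j (P i) - pderiv i (P j))

lemma ae_zero_on_open {F : Type*} [NormedAddCommGroup F] {f : (Fin 3 → ℝ) → F}
    (hf : Continuous f) {K : Set (Fin 3 → ℝ)} (hKo : IsOpen K)
    (h : f =ᵐ[volume.restrict K] 0) : ∀ x ∈ K, f x = 0 := by
  intro x hx
  by_contra hne
  have hU : IsOpen (K ∩ {y | f y ≠ 0}) :=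
    hKo.inter (isOpen_compl_singleton.preimage hf)
  have hUne : (K ∩ {y | f y ≠ 0}).Nonempty := ⟨x, hx, hne⟩
  have hpos : 0 < volume (K ∩ {y | f y ≠ 0}) := hU.measure_pos volume hUne
  have hmeas : MeasurableSet {y : Fin 3 → ℝ | f y ≠ 0} :=
    (isOpen_compl_singleton.preimage hf).measurableSet
  have h' : ∀ᵐ y ∂(volume.restrict K), f y = 0 := by simpa [Filter.EventuallyEq] using h
  rw [ae_iff] at h'
  have h0 : volume ({y : Fin 3 → ℝ | f y ≠ 0} ∩ K) = 0 := by
    rw [← Measure.restrict_apply hmeas]; exact h'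
  rw [Set.inter_comm] at hpos
  exact absurd h0 hpos.ne'

lemma korn_core (m : ℕ) (K : Set (Fin 3 → ℝ)) (hKo : IsOpen K)
    (hKne : K.Nonempty) (hKbd : Bornology.IsBounded K) :
    ∃ C > 0, ∀ P : Fin 3 → MvPolynomial (Fin 3) ℝ, (∀ i, (P i).totalDegree ≤ m) →
      ∃ B : Matrix (Fin 3) (Fin 3) ℝ, Bᵀ = -B ∧
        (∫ x in K, frobSq (Matrix.of fun i j => eval x (pderiv j (P i)) + B i j)) ≤
          C * ∫ x in K, frobSq (Matrix.of fun i j =>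
            (eval x (pderiv j (P i)) + eval x (pderiv i (P j))) / 2) := by
  classical
  obtain ⟨x₀, hx₀⟩ := hKne
  set μ : Measure (Fin 3 → ℝ) := volume.restrict K with hμ
  haveI : IsFiniteMeasure μ := ⟨by
    rw [hμ, Measure.restrict_apply_univ]; exact hKbd.measure_lt_top⟩
  -- the two function families
  set f1 : (Fin 3 → MvPolynomial (Fin 3) ℝ) → (Fin 3 → ℝ) →
      EuclideanSpace ℝ (Fin 3 × Fin 3) := fun P x =>
    (WithLp.equiv 2 ((Fin 3 × Fin 3) → ℝ)).symm
      (fun q => eval x (pderiv q.2 (P q.1)) - eval x₀ (aPoly P q.1 q.2)) with hf1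
  set f2 : (Fin 3 → MvPolynomial (Fin 3) ℝ) → (Fin 3 → ℝ) →
      EuclideanSpace ℝ (Fin 3 × Fin 3) := fun P x =>
    (WithLp.equiv 2 ((Fin 3 × Fin 3) → ℝ)).symm
      (fun q => (eval x (pderiv q.2 (P q.1)) + eval x (pderiv q.1 (P q.2))) / 2) with hf2
  have hc1 : ∀ P, Continuous (f1 P) := by
    intro P
    apply (PiLp.continuous_toLp 2 (fun _ : Fin 3 × Fin 3 => ℝ)).comp
    exact continuous_pi fun q => (continuous_evalp _).sub continuous_const
  have hc2 : ∀ P, Continuous (f2 P) := by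
    intro P
    apply (PiLp.continuous_toLp 2 (fun _ : Fin 3 × Fin 3 => ℝ)).comp
    exact continuous_pi fun q => ((continuous_evalp _).add (continuous_evalp _)).div_const 2
  have memL2 : ∀ f : (Fin 3 → ℝ) → EuclideanSpace ℝ (Fin 3 × Fin 3),
      Continuous f → MemLp f 2 μ := by
    intro f hf
    obtain ⟨Cb, hCb⟩ := hKbd.isCompact_closure.exists_bound_of_continuousOn
      hf.continuousOn
    refine MemLp.of_bound hf.aestronglyMeasurable Cb ?_
    filter_upwards [ae_restrict_mem hKo.measurableSet] with x hx
    exact hCb x (subset_closure hx)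
  -- norm-squared identity
  have hnorm : ∀ (f : (Fin 3 → ℝ) → EuclideanSpace ℝ (Fin 3 × Fin 3))
      (hf : MemLp f 2 μ), ‖hf.toLp f‖ ^ 2
        = ∫ x, (∑ q : Fin 3 × Fin 3, (f x q) ^ 2) ∂μ := by
    intro f hf
    rw [← real_inner_self_eq_norm_sq, L2.inner_def]
    rw [integral_congr_ae (g := fun a => ∑ q : Fin 3 × Fin 3, (f a q)^2)]
    filter_upwards [hf.coeFn_toLp] with a ha
    rw [ha, PiLp.inner_apply]
    congr 1
    ext q
    simp [RCLike.inner_apply, starRingEnd_apply, sq]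
  -- the finite-dimensional space
  set V := Fin 3 → (restrictTotalDegree (Fin 3) ℝ m) with hV
  set cf : V → (Fin 3 → MvPolynomial (Fin 3) ℝ) := fun P i => (P i : MvPolynomial (Fin 3) ℝ)
    with hcf
  have cf_add : ∀ P Q : V, cf (P + Q) = cf P + cf Q := fun P Q => rfl
  have cf_smul : ∀ (r : ℝ) (P : V), cf (r • P) = r • cf P := fun r P => rfl
  have hPQ : ∀ (P Q : V) (i : Fin 3),
      (((P + Q) i : restrictTotalDegree (Fin 3) ℝ m) : MvPolynomial (Fin 3) ℝ)
        = ↑(P i) + ↑(Q i) := fun _ _ _ => rfl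
  have hrP : ∀ (r : ℝ) (P : V) (i : Fin 3),
      (((r • P) i : restrictTotalDegree (Fin 3) ℝ m) : MvPolynomial (Fin 3) ℝ)
        = (MvPolynomial.C r : MvPolynomial (Fin 3) ℝ) * ↑(P i) := fun r P i => by
    rw [show ((r • P) i : restrictTotalDegree (Fin 3) ℝ m) = r • (P i) from rfl,
      Submodule.coe_smul, MvPolynomial.smul_eq_C_mul]
  -- pointwise linearity of the two families
  have f1_add : ∀ P Q : V, f1 (cf (P + Q)) = f1 (cf P) + f1 (cf Q) := by
    intro P Q
    funext x; ext q
    simp only [hf1, hcf, hPQ, WithLp.equiv_symm_apply, PiLp.toLp_apply, Pi.add_apply,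
      PiLp.add_apply, aPoly, map_add, eval_add, eval_mul, eval_C, eval_sub, map_sub]
    ring
  have f1_smul : ∀ (r : ℝ) (P : V), f1 (cf (r • P)) = r • f1 (cf P) := by
    intro r P
    funext x; ext q
    simp only [hf1, hcf, hrP, WithLp.equiv_symm_apply, PiLp.toLp_apply, Pi.smul_apply, PiLp.smul_apply, aPoly,
      pderiv_mul, pderiv_C,
      map_add, map_sub, _root_.map_mul, eval_add, eval_mul, eval_C, eval_sub,
      mul_zero, zero_mul, add_zero, zero_add, smul_eq_mul]
    ring
  have f2_add : ∀ P Q : V, f2 (cf (P + Q)) = f2 (cf P) + f2 (cf Q) := by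
    intro P Q
    funext x; ext q
    simp only [hf2, hcf, hPQ, WithLp.equiv_symm_apply, PiLp.toLp_apply, Pi.add_apply,
      PiLp.add_apply, map_add, eval_add]
    ring
  have f2_smul : ∀ (r : ℝ) (P : V), f2 (cf (r • P)) = r • f2 (cf P) := by
    intro r P
    funext x; ext q
    simp only [hf2, hcf, hrP, WithLp.equiv_symm_apply, PiLp.toLp_apply, Pi.smul_apply, PiLp.smul_apply,
      pderiv_mul, pderiv_C,
      map_add, _root_.map_mul, eval_add, eval_mul, eval_C,
      mul_zero, zero_mul, add_zero, zero_add, smul_eq_mul]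
    ring
  -- the linear maps into L²
  have mem1 : ∀ P : V, MemLp (f1 (cf P)) 2 μ := fun P => memL2 _ (hc1 (cf P))
  have mem2 : ∀ P : V, MemLp (f2 (cf P)) 2 μ := fun P => memL2 _ (hc2 (cf P))
  let T1 : V →ₗ[ℝ] Lp (EuclideanSpace ℝ (Fin 3 × Fin 3)) 2 μ :=
    IsLinearMap.mk' (fun P : V => (mem1 P).toLp (f1 (cf P)))
      ⟨fun P Q => by
        rw [MemLp.toLp_congr (mem1 (P + Q)) ((mem1 P).add (mem1 Q))
          (Filter.Eventually.of_forall fun x => congrFun (f1_add P Q) x)]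
        exact MemLp.toLp_add _ _,
      fun r P => by
        rw [MemLp.toLp_congr (mem1 (r • P)) ((mem1 P).const_smul r)
          (Filter.Eventually.of_forall fun x => congrFun (f1_smul r P) x)]
        exact MemLp.toLp_const_smul r _⟩
  let T2 : V →ₗ[ℝ] Lp (EuclideanSpace ℝ (Fin 3 × Fin 3)) 2 μ :=
    IsLinearMap.mk' (fun P : V => (mem2 P).toLp (f2 (cf P)))
      ⟨fun P Q => by
        rw [MemLp.toLp_congr (mem2 (P + Q)) ((mem2 P).add (mem2 Q))
          (Filter.Eventually.of_forall fun x => congrFun (f2_add P Q) x)]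
        exact MemLp.toLp_add _ _,
      fun r P => by
        rw [MemLp.toLp_congr (mem2 (r • P)) ((mem2 P).const_smul r)
          (Filter.Eventually.of_forall fun x => congrFun (f2_smul r P) x)]
        exact MemLp.toLp_const_smul r _⟩
  -- kernel inclusion
  have hker : LinearMap.ker T2 ≤ LinearMap.ker T1 := by
    intro Pv hPv
    simp only [LinearMap.mem_ker, T1, T2, IsLinearMap.mk'_apply] at hPv ⊢
    set P : Fin 3 → MvPolynomial (Fin 3) ℝ := cf Pv with hP
    have hae : f2 P =ᵐ[μ] 0 := by
      refine (MemLp.toLp_eq_toLp_iff (mem2 Pv) MemLp.zero).mp ?_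
      rw [hPv, MemLp.toLp_zero]
    have hK0 : ∀ x ∈ K, f2 P x = 0 := ae_zero_on_open (hc2 P) hKo hae
    have hzero : ∀ i j : Fin 3,
        MvPolynomial.C ((2:ℝ)⁻¹) * (pderiv j (P i) + pderiv i (P j)) = 0 := by
      intro i j
      refine eq_zero_of_eqOn_open _ hKo ⟨x₀, hx₀⟩ fun x hx => ?_
      have hcomp := congrArg
        (fun v : EuclideanSpace ℝ (Fin 3 × Fin 3) => v (i, j)) (hK0 x hx)
      simp only [hf2, WithLp.equiv_symm_apply, PiLp.toLp_apply] at hcomp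
      rw [eval_mul, eval_C, eval_add]
      simp only [PiLp.zero_apply] at hcomp
      linarith
    have hanti : ∀ i j : Fin 3, pderiv j (P i) + pderiv i (P j) = 0 := by
      intro i j
      have h2 : MvPolynomial.C (2:ℝ) *
          (MvPolynomial.C ((2:ℝ)⁻¹) * (pderiv j (P i) + pderiv i (P j))) = 0 := by
        rw [hzero i j, mul_zero]
      rwa [← mul_assoc, ← MvPolynomial.C_mul, mul_inv_cancel₀ (two_ne_zero),
        MvPolynomial.C_1, one_mul] at h2
    have e : ∀ i j : Fin 3, pderiv j (P i) = - pderiv i (P j) :=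
      fun i j => eq_neg_of_add_eq_zero_left (hanti i j)
    have hsec : ∀ i j k : Fin 3, pderiv k (pderiv j (P i)) = 0 := by
      intro i j k
      have tneg : pderiv k (pderiv j (P i)) = - pderiv k (pderiv j (P i)) := by
        calc pderiv k (pderiv j (P i))
            = - pderiv k (pderiv i (P j)) := by rw [e i j, map_neg]
          _ = - pderiv i (pderiv k (P j)) := by rw [pderiv_comm]
          _ = pderiv i (pderiv j (P k)) := by rw [e j k, map_neg, neg_neg]
          _ = pderiv j (pderiv i (P k)) := by rw [pderiv_comm]
          _ = - pderiv j (pderiv k (P i)) := by rw [e k i, map_neg]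
          _ = - pderiv k (pderiv j (P i)) := by rw [pderiv_comm]
      have h2t : (2:ℝ) • pderiv k (pderiv j (P i)) = 0 := by
        rw [two_smul]
        nth_rewrite 2 [tneg]
        exact add_neg_cancel _
      rw [MvPolynomial.smul_eq_C_mul] at h2t
      rcases mul_eq_zero.mp h2t with h | h
      · exact absurd h (by simp [MvPolynomial.C_eq_zero])
      · exact h
    have hconst : ∀ (i j : Fin 3) (x : Fin 3 → ℝ),
        eval x (pderiv j (P i)) = eval x₀ (pderiv j (P i)) :=
      fun i j x => eval_const_of_pderiv_zero _ (fun k => hsec i j k) x x₀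
    have hf10 : f1 P = 0 := by
      funext x; ext q
      simp only [hf1, WithLp.equiv_symm_apply, PiLp.toLp_apply]
      have hAB : eval x₀ (pderiv q.2 (P q.1)) + eval x₀ (pderiv q.1 (P q.2)) = 0 := by
        have := congrArg (eval x₀) (hanti q.1 q.2)
        simpa using this
      rw [hconst q.1 q.2 x]
      simp only [aPoly, eval_mul, eval_C, eval_sub, Pi.zero_apply, PiLp.zero_apply]
      linarith
    calc (mem1 Pv).toLp (f1 P)
        = (MemLp.zero (p := 2) (μ := μ)).toLp (0 : (Fin 3 → ℝ) → EuclideanSpace ℝ (Fin 3 × Fin 3)) :=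
          MemLp.toLp_congr _ _ (Filter.Eventually.of_forall fun x => congrFun hf10 x)
      _ = 0 := MemLp.toLp_zero _
  obtain ⟨C₀, hC₀pos, hC₀⟩ := exists_bound_of_ker_le T1 T2 hker
  refine ⟨C₀ ^ 2, by positivity, fun P hdeg => ?_⟩
  set Pv : V := fun i => ⟨P i, (mem_restrictTotalDegree (Fin 3) m (P i)).mpr (hdeg i)⟩
    with hPv
  have hcfPv : cf Pv = P := rfl
  refine ⟨Matrix.of fun i j => - eval x₀ (aPoly P i j), ?_, ?_⟩
  · ext i j
    simp only [Matrix.transpose_apply, Matrix.neg_apply, Matrix.of_apply, aPoly,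
      eval_mul, eval_C, eval_sub, neg_neg]
    ring
  · have h1 : (∫ x in K, frobSq
        (Matrix.of fun i j => eval x (pderiv j (P i))
          + (Matrix.of fun i j => - eval x₀ (aPoly P i j)) i j)) = ‖T1 Pv‖ ^ 2 := by
      rw [show (T1 Pv : Lp (EuclideanSpace ℝ (Fin 3 × Fin 3)) 2 μ)
        = (mem1 Pv).toLp (f1 (cf Pv)) from rfl, hnorm _ (mem1 Pv)]
      refine integral_congr_ae (Filter.Eventually.of_forall fun x => ?_)
      show frobSq _ = ∑ q : Fin 3 × Fin 3, _
      rw [Fintype.sum_prod_type]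
      simp only [hf1, hcfPv, WithLp.equiv_symm_apply, PiLp.toLp_apply, frobSq, Matrix.of_apply,
        Matrix.add_apply, sub_eq_add_neg]
    have h2 : (∫ x in K, frobSq (Matrix.of fun i j =>
        (eval x (pderiv j (P i)) + eval x (pderiv i (P j))) / 2)) = ‖T2 Pv‖ ^ 2 := by
      rw [show (T2 Pv : Lp (EuclideanSpace ℝ (Fin 3 × Fin 3)) 2 μ)
        = (mem2 Pv).toLp (f2 (cf Pv)) from rfl, hnorm _ (mem2 Pv)]
      refine integral_congr_ae (Filter.Eventually.of_forall fun x => ?_)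
      show frobSq _ = ∑ q : Fin 3 × Fin 3, _
      rw [Fintype.sum_prod_type]
      simp only [hf2, hcfPv, WithLp.equiv_symm_apply, PiLp.toLp_apply, frobSq, Matrix.of_apply]
    rw [h1, h2]
    calc ‖T1 Pv‖ ^ 2 ≤ (C₀ * ‖T2 Pv‖) ^ 2 := by
          have := hC₀ Pv
          nlinarith [norm_nonneg (T1 Pv), norm_nonneg (T2 Pv)]
      _ = C₀ ^ 2 * ‖T2 Pv‖ ^ 2 := by ring


lemma frobSq_smul (r : ℝ) (M : Matrix (Fin 3) (Fin 3) ℝ) :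
    frobSq (r • M) = r ^ 2 * frobSq M := by
  simp [frobSq, Matrix.smul_apply, smul_eq_mul, mul_pow, Finset.mul_sum]


end KornAux

/-- Elementwise Korn inequality with a constant independent of element size and position:
for every degree bound `m` and nonempty bounded open `K ⊆ ℝ³` there is `C > 0` such that
for all `h > 0`, `c ∈ ℝ³` and every polynomial map `v` of degree at most `m`, there is an
antisymmetric `B` with `∫_{K_{h,c}} ‖∇v + B‖_F² ≤ C ∫_{K_{h,c}} ‖ε(v)‖_F²`. -/
theorem korn_polynomial_scaled (m : ℕ) (K : Set (Fin 3 → ℝ)) (hKo : IsOpen K)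
    (hKne : K.Nonempty) (hKbd : Bornology.IsBounded K) :
    ∃ C > 0, ∀ h : ℝ, 0 < h → ∀ c : Fin 3 → ℝ,
      ∀ P : Fin 3 → MvPolynomial (Fin 3) ℝ, (∀ i, (P i).totalDegree ≤ m) →
        ∃ B : Matrix (Fin 3) (Fin 3) ℝ, Bᵀ = -B ∧
          (∫ x in scaledElt K h c,
              frobSq (jacMat (fun y i => MvPolynomial.eval y (P i)) x + B)) ≤
            C * ∫ x in scaledElt K h c,
              frobSq (symGrad (fun y i => MvPolynomial.eval y (P i)) x) := by
  obtain ⟨C, hCpos, hcore⟩ := korn_core m K hKo hKne hKbd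
  refine ⟨C, hCpos, ?_⟩
  intro h hh c P hdeg
  set Q : Fin 3 → MvPolynomial (Fin 3) ℝ := fun i => affSub h c (P i) with hQ
  have hQdeg : ∀ i, (Q i).totalDegree ≤ m :=
    fun i => (totalDegree_affSub_le h c (P i)).trans (hdeg i)
  obtain ⟨B', hB'anti, hB'⟩ := hcore Q hQdeg
  refine ⟨h⁻¹ • B', by rw [Matrix.transpose_smul, hB'anti, smul_neg], ?_⟩
  set A : (Fin 3 → ℝ) → (Fin 3 → ℝ) := fun y => h • y + c with hA
  have hAder : ∀ y, HasFDerivAt A (h • ContinuousLinearMap.id ℝ (Fin 3 → ℝ)) y :=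
    fun y => ((hasFDerivAt_id y).const_smul h).add_const c
  have hAinj : Set.InjOn A K := by
    intro a _ b _ hab
    have h1 : h • a = h • b := by
      have := congrArg (fun z => z - c) hab
      simpa [hA] using this
    exact smul_right_injective (Fin 3 → ℝ) hh.ne' h1
  have hdet : |(h • ContinuousLinearMap.id ℝ (Fin 3 → ℝ)).det| = h ^ 3 := by
    have h1 : (h • ContinuousLinearMap.id ℝ (Fin 3 → ℝ)).det
        = (h • (LinearMap.id : (Fin 3 → ℝ) →ₗ[ℝ] (Fin 3 → ℝ))).det := rfl
    rw [h1, LinearMap.det_smul, LinearMap.det_id, Module.finrank_fin_fun, mul_one,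
      abs_of_pos (pow_pos hh 3)]
  have hcov : ∀ F : (Fin 3 → ℝ) → ℝ,
      ∫ x in scaledElt K h c, F x = ∫ y in K, h ^ 3 • F (A y) := by
    intro F
    rw [show scaledElt K h c = A '' K from rfl,
      integral_image_eq_integral_abs_det_fderiv_smul volume hKo.measurableSet
        (fun y _ => (hAder y).hasFDerivWithinAt) hAinj F]
    simp only [hdet]
  have hkey : ∀ (i j : Fin 3) (y : Fin 3 → ℝ),
      eval (A y) (pderiv j (P i)) = h⁻¹ * eval y (pderiv j (Q i)) := by
    intro i j y
    rw [hQ, eval_pderiv_affSub, ← mul_assoc, inv_mul_cancel₀ hh.ne', one_mul]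
  set v : (Fin 3 → ℝ) → (Fin 3 → ℝ) := fun y k => eval y (P k) with hv
  set G1 : (Fin 3 → ℝ) → ℝ :=
    fun y => frobSq (Matrix.of fun i j => eval y (pderiv j (Q i)) + B' i j) with hG1
  set G2 : (Fin 3 → ℝ) → ℝ := fun y => frobSq (Matrix.of fun i j =>
    (eval y (pderiv j (Q i)) + eval y (pderiv i (Q j))) / 2) with hG2
  have hptL : ∀ y, frobSq (jacMat v (A y) + h⁻¹ • B') = h⁻¹ ^ 2 * G1 y := by
    intro y
    have hm : jacMat v (A y) + h⁻¹ • B'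
        = h⁻¹ • (Matrix.of fun i j => eval y (pderiv j (Q i)) + B' i j) := by
      ext i j
      simp only [Matrix.add_apply, Matrix.smul_apply, Matrix.of_apply, jacMat,
        smul_eq_mul, hv]
      rw [pderiv3_eval P i j (A y), hkey i j y]
      ring
    rw [hm, frobSq_smul, hG1]
  have hptR : ∀ y, frobSq (symGrad v (A y)) = h⁻¹ ^ 2 * G2 y := by
    intro y
    have hm : symGrad v (A y) = h⁻¹ • (Matrix.of fun i j =>
        (eval y (pderiv j (Q i)) + eval y (pderiv i (Q j))) / 2) := by
      ext i j
      simp only [Matrix.smul_apply, Matrix.of_apply, symGrad, smul_eq_mul, hv]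
      rw [pderiv3_eval P i j (A y), pderiv3_eval P j i (A y), hkey i j y, hkey j i y]
      ring
    rw [hm, frobSq_smul, hG2]
  calc ∫ x in scaledElt K h c, frobSq (jacMat v x + h⁻¹ • B')
      = ∫ y in K, h ^ 3 • frobSq (jacMat v (A y) + h⁻¹ • B') :=
        hcov (fun x => frobSq (jacMat v x + h⁻¹ • B'))
    _ = (h ^ 3 * h⁻¹ ^ 2) * ∫ y in K, G1 y := by
        have hp : ∀ y, h ^ 3 • (fun x => frobSq (jacMat v x + h⁻¹ • B')) (A y)
            = (h ^ 3 * h⁻¹ ^ 2) • G1 y := fun y => by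
          beta_reduce
          rw [hptL y, smul_eq_mul, smul_eq_mul]; ring
        rw [integral_congr_ae (Filter.Eventually.of_forall hp), integral_smul,
          smul_eq_mul]
    _ ≤ (h ^ 3 * h⁻¹ ^ 2) * (C * ∫ y in K, G2 y) := by
        refine mul_le_mul_of_nonneg_left hB' (by positivity)
    _ = C * ((h ^ 3 * h⁻¹ ^ 2) * ∫ y in K, G2 y) := by ring
    _ = C * ∫ x in scaledElt K h c, frobSq (symGrad v x) := by
        rw [hcov (fun x => frobSq (symGrad v x))]
        have hp : ∀ y, h ^ 3 • (fun x => frobSq (symGrad v x)) (A y)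
            = (h ^ 3 * h⁻¹ ^ 2) • G2 y := fun y => by
          beta_reduce
          rw [hptR y, smul_eq_mul, smul_eq_mul]; ring
        rw [integral_congr_ae (Filter.Eventually.of_forall hp), integral_smul,
          smul_eq_mul]
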